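/- In the setting of the previous factorization, the matrix α satisfies c* J_{p,q} α = 0, where c = (ξ; η) and J_{p,q} = diag(I_p, -I_q). Concretely: ξ*V = 0 and (ξ*ξ/γ)η* - η*(I_q + ηη*/γ) = 0. -/

import Mathlib

open Matrix ComplexOrder

/-- The positive semidefinite square root, as defined in the older Mathlib (removed since). -/
noncomputable def Matrix.PosSemidef.sqrt {n 𝕜 : Type*} [Fintype n] [RCLike 𝕜] [DecidableEq n]
    {A : Matrix n n 𝕜} (hA : A.PosSemidef) : Matrix n n 𝕜 :=
  (hA.1.eigenvectorUnitary : Matrix n n 𝕜) * diagonal ((↑) ∘ (√·) ∘ hA.1.eigenvalues) *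
    (star hA.1.eigenvectorUnitary : Matrix n n 𝕜)

private lemma one_one_mul {m : Type*} [Fintype m] (A : Matrix (Fin 1) (Fin 1) ℂ)
    (B : Matrix (Fin 1) m ℂ) : A * B = (A 0 0) • B := by
  ext i j
  fin_cases i
  simp [Matrix.mul_apply, Fin.sum_univ_one]

theorem stmt8 {n q : ℕ} (ξ : Matrix (Fin (n + 1)) (Fin 1) ℂ) (η : Matrix (Fin q) (Fin 1) ℂ)
    (hξ : ξ ≠ 0)
    (γ : ℝ) (hγpos : 0 < γ) (hγ : (γ : ℂ) = (ξᴴ * ξ) 0 0 - (ηᴴ * η) 0 0)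
    (V : Matrix (Fin (n + 1)) (Fin n) ℂ) (hV : ξᴴ * V = 0)
    (M : Matrix (Fin q) (Fin q) ℂ) (hMdef : M = 1 + (γ : ℂ)⁻¹ • (η * ηᴴ))
    (hM : M.PosSemidef)
    (α : Matrix (Fin (n + 1) ⊕ Fin q) (Fin n ⊕ Fin q) ℂ)
    (hα : α = fromBlocks V ((γ : ℂ)⁻¹ • (ξ * ηᴴ) * (hM.sqrt)⁻¹) 0 hM.sqrt)
    (c : Matrix (Fin (n + 1) ⊕ Fin q) (Fin 1) ℂ)
    (hc : c = Matrix.of fun i (_ : Fin 1) => Sum.elim (fun i => ξ i 0) (fun j => η j 0) i) :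
    cᴴ * fromBlocks (1 : Matrix (Fin (n + 1)) (Fin (n + 1)) ℂ) 0 0
        (-(1 : Matrix (Fin q) (Fin q) ℂ)) * α = 0 ∧
      (((ξᴴ * ξ) 0 0 / (γ : ℂ)) • ηᴴ - ηᴴ * M) = 0 := by
  have hγne : (γ : ℂ) ≠ 0 := by exact_mod_cast hγpos.ne'
  -- second part
  have key : (((ξᴴ * ξ) 0 0 / (γ : ℂ)) • ηᴴ - ηᴴ * M) = 0 := by
    have h1 : ηᴴ * (η * ηᴴ) = ((ηᴴ * η) 0 0) • ηᴴ := by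
      rw [← Matrix.mul_assoc, one_one_mul (ηᴴ * η) ηᴴ]
    rw [hMdef, Matrix.mul_add, Matrix.mul_one, Matrix.mul_smul, h1, smul_smul]
    have hco : ((ξᴴ * ξ) 0 0 / (γ : ℂ)) = 1 + (γ : ℂ)⁻¹ * ((ηᴴ * η) 0 0) := by
      field_simp
      linear_combination -hγ
    rw [hco]
    module
  refine ⟨?_, key⟩
  -- positive definiteness of M
  have hMpd : M.PosDef := by
    rw [hMdef]
    refine Matrix.PosDef.add_posSemidef Matrix.PosDef.one ?_
    have h2 : (γ : ℂ)⁻¹ • (η * ηᴴ) =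
        ((((Real.sqrt γ)⁻¹ : ℝ) : ℂ) • η) * ((((Real.sqrt γ)⁻¹ : ℝ) : ℂ) • η)ᴴ := by
      rw [conjTranspose_smul, Matrix.smul_mul, Matrix.mul_smul, smul_smul]
      congr 1
      have h : ((Real.sqrt γ)⁻¹ : ℝ) * ((Real.sqrt γ)⁻¹ : ℝ) = γ⁻¹ := by
        rw [← mul_inv, Real.mul_self_sqrt hγpos.le]
      rw [RCLike.star_def, Complex.conj_ofReal, ← Complex.ofReal_mul, h, Complex.ofReal_inv]
    rw [h2]
    exact posSemidef_self_mul_conjTranspose _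
  have hSS : hM.sqrt * hM.sqrt = M := by
    have hU := Unitary.coe_star_mul_self hM.1.eigenvectorUnitary
    have hD : diagonal (((↑) ∘ (√·) ∘ hM.1.eigenvalues : Fin q → ℂ)) *
        diagonal ((↑) ∘ (√·) ∘ hM.1.eigenvalues) = diagonal (RCLike.ofReal ∘ hM.1.eigenvalues) := by
      rw [diagonal_mul_diagonal]
      congr 1; funext i
      simp only [Function.comp_apply]
      rw [← Complex.ofReal_mul, Real.mul_self_sqrt (hM.eigenvalues_nonneg i)]
      rfl
    conv_rhs => rw [hM.1.spectral_theorem]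
    rw [Unitary.conjStarAlgAut_apply, ← hD]
    unfold Matrix.PosSemidef.sqrt
    simp only [Matrix.mul_assoc]
    rw [← Matrix.mul_assoc _ (hM.1.eigenvectorUnitary : Matrix (Fin q) (Fin q) ℂ), hU, Matrix.one_mul]
    rfl
  have hdet : IsUnit (hM.sqrt).det := by
    have hMne : M.det ≠ 0 := hMpd.det_pos.ne'
    rw [← hSS, Matrix.det_mul] at hMne
    exact (mul_ne_zero_iff.mp hMne).1.isUnit
  have hSinv : hM.sqrt * (hM.sqrt)⁻¹ = 1 := Matrix.mul_nonsing_inv _ hdet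
  have hc' : c = fromRows ξ η := by
    subst hc; ext i j; fin_cases j; cases i <;> rfl
  have hcH : cᴴ = fromCols ξᴴ ηᴴ :=
    hc' ▸ conjTranspose_fromRows_eq_fromCols_conjTranspose ξ η
  have h3 : ξᴴ * ((γ : ℂ)⁻¹ • (ξ * ηᴴ)) = (((ξᴴ * ξ) 0 0) / (γ : ℂ)) • ηᴴ := by
    rw [Matrix.mul_smul, ← Matrix.mul_assoc, one_one_mul (ξᴴ * ξ) ηᴴ, smul_smul,
      div_eq_inv_mul]
  have h4 : (((ξᴴ * ξ) 0 0) / (γ : ℂ)) • ηᴴ = ηᴴ * M := sub_eq_zero.mp key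
  have hb2 : ξᴴ * ((γ : ℂ)⁻¹ • (ξ * ηᴴ) * (hM.sqrt)⁻¹) + (-ηᴴ) * hM.sqrt = 0 := by
    have : ξᴴ * ((γ : ℂ)⁻¹ • (ξ * ηᴴ) * (hM.sqrt)⁻¹) = ηᴴ * hM.sqrt := by
      calc ξᴴ * ((γ : ℂ)⁻¹ • (ξ * ηᴴ) * (hM.sqrt)⁻¹)
          = ξᴴ * ((γ : ℂ)⁻¹ • (ξ * ηᴴ)) * (hM.sqrt)⁻¹ := by
            rw [Matrix.mul_assoc]
        _ = (ηᴴ * M) * (hM.sqrt)⁻¹ := by rw [h3, h4]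
        _ = ηᴴ * hM.sqrt := by
            have hMS : ηᴴ * hM.sqrt = ηᴴ * M * hM.sqrt⁻¹ := by
              calc ηᴴ * hM.sqrt = ηᴴ * hM.sqrt * (hM.sqrt * hM.sqrt⁻¹) := by
                    rw [hSinv, Matrix.mul_one]
                _ = ηᴴ * (hM.sqrt * hM.sqrt) * hM.sqrt⁻¹ := by
                    simp only [Matrix.mul_assoc]
                _ = ηᴴ * M * hM.sqrt⁻¹ := by rw [hSS]
            rw [← hMS]
    rw [this, Matrix.neg_mul]
    exact add_neg_cancel _
  rw [hcH, hα, fromCols_mul_fromBlocks]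
  simp only [Matrix.mul_one, Matrix.mul_zero, add_zero, Matrix.mul_neg, zero_add]
  rw [fromCols_mul_fromBlocks]
  simp only [hV, Matrix.mul_zero, add_zero, zero_add, hb2, fromCols_zero]
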